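/- Let ℓ ≥ 1 and let r satisfy 0 ≤ r < 2^ℓ. Then Δ₁₂(2^ℓ + r) = Δ₁₂(r) + 1 if r ≤ 2^{ℓ−1}, and Δ₁₂(2^ℓ + r) = Δ₁₂(2^{ℓ+1} − r) if r > 2^{ℓ−1}. Moreover, m₁₂(2^ℓ + r) ≡ m₁₂(r) + ℓ (mod 2) if r ≤ 2^{ℓ−1}, and m₁₂(2^ℓ + r) ≡ m₁₂(2^{ℓ+1} − r) + Δ₁₂(2^{ℓ+1} − r) (mod 2) if r > 2^{ℓ−1}. -/
import Mathlib


/-- The 2-kernel of a sequence `s : ℕ → ℤ`. -/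
def kernel2 (s : ℕ → ℤ) : Set (ℕ → ℤ) :=
  {t | ∃ i j : ℕ, j < 2 ^ i ∧ t = fun n => s (2 ^ i * n + j)}

/-- A sequence is 2-regular if the ℤ-module spanned by its 2-kernel is finitely generated. -/
def IsTwoRegular (s : ℕ → ℤ) : Prop :=
  (Submodule.span ℤ (kernel2 s)).FG

/-- A sequence is 2-automatic if its 2-kernel is finite. -/
def IsTwoAutomatic (s : ℕ → ℤ) : Prop :=
  (kernel2 s).Finite

/-- The period-doubling word, fixed point (starting with 0) of 0 ↦ 01, 1 ↦ 00:
its `n`-th letter is the parity of the 2-adic valuation of `n+1`. -/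
def pd (n : ℕ) : ℕ := (n + 1).factorization 2 % 2

/-- The Thue–Morse word, fixed point (starting with 0) of 0 ↦ 01, 1 ↦ 10:
its `n`-th letter is the parity of the binary digit sum of `n`. -/
def tm (n : ℕ) : ℕ := (Nat.digits 2 n).sum % 2

/-- The 2-block coding `x = block(p, 2)` of the period-doubling word. -/
def xw (n : ℕ) : ℕ := 2 * pd n + pd (n + 1)

/-- The 2-block coding `y = block(t, 2)` of the Thue–Morse word. -/
def yw (n : ℕ) : ℕ := 2 * tm n + tm (n + 1)

/-- The factor of an infinite word `w` of length `len` occurring at position `i`. -/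
def factorAt (w : ℕ → ℕ) (i len : ℕ) : List ℕ :=
  (List.range len).map fun k => w (i + k)

/-- `u` is a factor of the infinite word `w`. -/
def IsFactor (w : ℕ → ℕ) (u : List ℕ) : Prop :=
  ∃ i, u = factorAt w i u.length

/-- Maximal number of 0's in a factor of `x` of length `n`. -/
noncomputable def M0 (n : ℕ) : ℕ := sSup {k | ∃ i, (factorAt xw i n).count 0 = k}

/-- Minimal number of 0's in a factor of `x` of length `n`. -/
noncomputable def m0 (n : ℕ) : ℕ := sInf {k | ∃ i, (factorAt xw i n).count 0 = k}

noncomputable def D0 (n : ℕ) : ℕ := M0 n - m0 n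

/-- Maximal number of 2's in a factor of `x` of length `n`. -/
noncomputable def M2c (n : ℕ) : ℕ := sSup {k | ∃ i, (factorAt xw i n).count 2 = k}

/-- Minimal number of 2's in a factor of `x` of length `n`. -/
noncomputable def m2c (n : ℕ) : ℕ := sInf {k | ∃ i, (factorAt xw i n).count 2 = k}

/-- The max-jump function for `M0`. -/
noncomputable def JM0 : ℕ → ℕ
  | 0 => 0
  | n + 1 => if M0 n < M0 (n + 1) then 1 else 0

/-- The min-jump function for `m0`. -/
noncomputable def jm0 (n : ℕ) : ℕ := if m0 n < m0 (n + 1) then 1 else 0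

/-- Maximal total number of 1's and 2's in a factor of `y` of length `n`. -/
noncomputable def M12 (n : ℕ) : ℕ :=
  sSup {k | ∃ i, (factorAt yw i n).count 1 + (factorAt yw i n).count 2 = k}

/-- Minimal total number of 1's and 2's in a factor of `y` of length `n`. -/
noncomputable def m12 (n : ℕ) : ℕ :=
  sInf {k | ∃ i, (factorAt yw i n).count 1 + (factorAt yw i n).count 2 = k}

noncomputable def D12 (n : ℕ) : ℕ := M12 n - m12 n

/-- Maximal total number of 0's and 3's in a factor of `y` of length `n`. -/
noncomputable def M03 (n : ℕ) : ℕ :=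
  sSup {k | ∃ i, (factorAt yw i n).count 0 + (factorAt yw i n).count 3 = k}

/-- Minimal total number of 0's and 3's in a factor of `y` of length `n`. -/
noncomputable def m03 (n : ℕ) : ℕ :=
  sInf {k | ∃ i, (factorAt yw i n).count 0 + (factorAt yw i n).count 3 = k}

/-- The max-jump function for `M03`. -/
noncomputable def JM03 (n : ℕ) : ℕ := if M03 (n - 1) < M03 n then 1 else 0

/-- The min-jump function for `m03`. -/
noncomputable def jm03 (n : ℕ) : ℕ := if m03 n < m03 (n + 1) then 1 else 0

/-- Abelian complexity: the number of abelian equivalence classes (i.e. distinct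
multisets of letters) of factors of `w` of length `n`. -/
noncomputable def abComplexity (w : ℕ → ℕ) (n : ℕ) : ℕ :=
  Set.ncard {m : Multiset ℕ | ∃ i, (↑(factorAt w i n) : Multiset ℕ) = m}

/-- The number of occurrences of `v` as a factor of `u`. -/
def countFactor (u v : List ℕ) : ℕ :=
  ((List.range (u.length + 1 - v.length)).filter
    fun i => decide ((u.drop i).take v.length = v)).length

/-- 2-abelian complexity: the number of 2-abelian equivalence classes of factors of `w`
of length `n`, where two words are 2-abelian equivalent when every word of length at most 2
occurs equally often in both. -/
noncomputable def abel2Complexity (w : ℕ → ℕ) (n : ℕ) : ℕ :=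
  Set.ncard {f : List ℕ → ℕ |
    ∃ i, f = fun v => if v.length ≤ 2 then countFactor (factorAt w i n) v else 0}

/-- The morphism φ : 0 ↦ 12, 1 ↦ 12, 2 ↦ 00. -/
def phiL : ℕ → List ℕ
  | 0 => [1, 2]
  | 1 => [1, 2]
  | 2 => [0, 0]
  | _ => []

/-- The morphism τ : 0 ↦ 0, 1 ↦ 2, 2 ↦ 1. -/
def tauL : ℕ → ℕ
  | 1 => 2
  | 2 => 1
  | n => n

lemma pd_le (n : ℕ) : pd n ≤ 1 := Nat.le_of_lt_succ (Nat.mod_lt _ (by norm_num))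

lemma pd_even (k : ℕ) : pd (2 * k) = 0 := by
  unfold pd
  rw [Nat.factorization_eq_zero_of_not_dvd (by omega)]

lemma pd_odd (k : ℕ) : pd (2 * k + 1) + pd k = 1 := by
  unfold pd
  have h : 2 * k + 1 + 1 = 2 * (k + 1) := by ring
  rw [h, Nat.factorization_mul (by norm_num) (by omega)]
  simp [Nat.Prime.factorization_self Nat.prime_two]
  omega

lemma dsum_succ (n : ℕ) : (Nat.digits 2 (n+1)).sum + (n+1).factorization 2
    = (Nat.digits 2 n).sum + 1 := by
  induction n using Nat.strong_induction_on with
  | _ n ih =>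
    rcases Nat.even_or_odd n with ⟨m, hm⟩ | ⟨m, hm⟩
    · have hm2 : n = 2 * m := by omega
      subst hm2
      rw [Nat.factorization_eq_zero_of_not_dvd (by omega)]
      rcases Nat.eq_zero_or_pos m with rfl | hp
      · simp
      · rw [Nat.digits_def' (by norm_num : 1 < 2) (by omega : 0 < 2*m+1),
          Nat.digits_def' (by norm_num : 1 < 2) (by omega : 0 < 2*m)]
        have e1 : (2*m+1)/2 = m := by omega
        have e2 : (2*m)/2 = m := by omega
        have e3 : (2*m+1)%2 = 1 := by omega
        have e4 : (2*m)%2 = 0 := by omega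
        rw [e1, e2, e3, e4]
        simp only [List.sum_cons]
        omega
    · have hm2 : n = 2 * m + 1 := by omega
      subst hm2
      have h1 : 2 * m + 1 + 1 = 2 * (m + 1) := by ring
      have ihm := ih m (by omega)
      rw [h1, Nat.factorization_mul (by norm_num) (by omega),
        Nat.digits_def' (by norm_num : 1 < 2) (by omega : 0 < 2*(m+1)),
        Nat.digits_def' (by norm_num : 1 < 2) (by omega : 0 < 2*m+1)]
      have e1 : (2*(m+1))/2 = m + 1 := by omega
      have e2 : (2*m+1)/2 = m := by omega
      have e3 : (2*(m+1))%2 = 0 := by omega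
      have e4 : (2*m+1)%2 = 1 := by omega
      rw [e1, e2, e3, e4]
      simp only [List.sum_cons, Finsupp.coe_add, Pi.add_apply,
        Nat.Prime.factorization_self Nat.prime_two]
      omega

lemma tm_pd (m : ℕ) : (tm m + tm (m+1) + pd m) % 2 = 1 := by
  have h := dsum_succ m
  unfold tm pd
  omega

def aw (i n : ℕ) : ℕ := ∑ k ∈ Finset.range n, pd (i + k)

lemma aw_zero (i : ℕ) : aw i 0 = 0 := by simp [aw]

lemma aw_succ (i n : ℕ) : aw i (n+1) = aw i n + pd (i+n) := by
  simp [aw, Finset.sum_range_succ]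

lemma aw_succ' (i n : ℕ) : aw i (n+1) = pd i + aw (i+1) n := by
  unfold aw
  rw [Finset.sum_range_succ']
  simp [add_comm, add_assoc, add_left_comm]

lemma aw_le (i n : ℕ) : aw i n ≤ n := by
  induction n with
  | zero => simp [aw_zero]
  | succ n ih => have := pd_le (i+n); rw [aw_succ]; omega

lemma L1 (j m : ℕ) : aw (2*j) (2*m) + aw j m = m := by
  induction m with
  | zero => simp [aw_zero]
  | succ m ih =>
    have h1 : 2*(m+1) = 2*m+1+1 := by ring
    rw [h1, aw_succ, aw_succ, aw_succ]
    have e1 : 2*j + 2*m = 2*(j+m) := by ring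
    have e2 : 2*j + (2*m+1) = 2*(j+m)+1 := by ring
    rw [e1, e2]
    have := pd_even (j+m)
    have := pd_odd (j+m)
    omega

lemma L2 (j m : ℕ) : aw (2*j+1) (2*m) + aw j m = m := by
  induction m with
  | zero => simp [aw_zero]
  | succ m ih =>
    have h1 : 2*(m+1) = 2*m+1+1 := by ring
    rw [h1, aw_succ, aw_succ, aw_succ]
    have e1 : 2*j+1 + 2*m = 2*(j+m)+1 := by ring
    have e2 : 2*j+1 + (2*m+1) = 2*(j+m+1) := by ring
    rw [e1, e2]
    have := pd_even (j+m+1)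
    have := pd_odd (j+m)
    omega

lemma L3 (j m : ℕ) : aw (2*j) (2*m+1) + aw j m = m := by
  rw [aw_succ]
  have e1 : 2*j + 2*m = 2*(j+m) := by ring
  rw [e1, pd_even]
  have := L1 j m
  omega

lemma L4 (j m : ℕ) : aw (2*j+1) (2*m+1) + aw j (m+1) = m + 1 := by
  rw [aw_succ' (2*j+1), aw_succ' j]
  have e1 : 2*j+1+1 = 2*(j+1) := by ring
  rw [e1]
  have h1 := L1 (j+1) m
  have h2 := pd_odd j
  omega

noncomputable def Aw (n : ℕ) : ℕ := sSup (Set.range fun i => aw i n)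
noncomputable def Bw (n : ℕ) : ℕ := sInf (Set.range fun i => aw i n)

lemma Aw_mem (n : ℕ) : ∃ i, aw i n = Aw n := by
  have h : (Set.range fun i => aw i n).Nonempty := ⟨aw 0 n, 0, rfl⟩
  have hb : BddAbove (Set.range fun i => aw i n) := ⟨n, by rintro x ⟨i, rfl⟩; exact aw_le i n⟩
  have := Nat.sSup_mem h hb
  exact this

lemma Bw_mem (n : ℕ) : ∃ i, aw i n = Bw n :=
  Nat.sInf_mem (⟨aw 0 n, 0, rfl⟩ : (Set.range fun i => aw i n).Nonempty)

lemma le_Aw (i n : ℕ) : aw i n ≤ Aw n :=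
  le_csSup ⟨n, by rintro x ⟨i, rfl⟩; exact aw_le i n⟩ ⟨i, rfl⟩

lemma Bw_le (i n : ℕ) : Bw n ≤ aw i n := Nat.sInf_le ⟨i, rfl⟩

lemma Aw_le (n : ℕ) : Aw n ≤ n := by
  obtain ⟨i, hi⟩ := Aw_mem n; rw [← hi]; exact aw_le i n

lemma Bw_le_Aw (n : ℕ) : Bw n ≤ Aw n := le_trans (Bw_le 0 n) (le_Aw 0 n)

lemma Bw_succ_le (j n : ℕ) : Bw (n+1) ≤ aw j n + 1 := by
  have h := Bw_le j (n+1)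
  rw [aw_succ] at h
  have := pd_le (j+n)
  omega

lemma R1 (s : ℕ) : Aw (2*s) + Bw s = s := by
  obtain ⟨i, hi⟩ := Aw_mem (2*s)
  obtain ⟨j0, hj0⟩ := Bw_mem s
  have hup : Aw (2*s) + Bw s ≤ s := by
    rcases Nat.even_or_odd i with ⟨j, hj⟩ | ⟨j, hj⟩
    · have hj' : i = 2*j := by omega
      subst hj'
      have := L1 j s; have := Bw_le j s; omega
    · have hj' : i = 2*j+1 := by omega
      subst hj'
      have := L2 j s; have := Bw_le j s; omega
  have hlo : s ≤ Aw (2*s) + Bw s := by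
    have h1 := L1 j0 s
    have h2 := le_Aw (2*j0) (2*s)
    omega
  omega

lemma R2 (s : ℕ) : Bw (2*s) + Aw s = s := by
  obtain ⟨i, hi⟩ := Bw_mem (2*s)
  obtain ⟨j0, hj0⟩ := Aw_mem s
  have hlo : s ≤ Bw (2*s) + Aw s := by
    rcases Nat.even_or_odd i with ⟨j, hj⟩ | ⟨j, hj⟩
    · have hj' : i = 2*j := by omega
      subst hj'
      have := L1 j s; have := le_Aw j s; omega
    · have hj' : i = 2*j+1 := by omega
      subst hj'
      have := L2 j s; have := le_Aw j s; omega
  have hup : Bw (2*s) + Aw s ≤ s := by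
    have h1 := L1 j0 s
    have h2 := Bw_le (2*j0) (2*s)
    have := aw_le (2*j0) (2*s)
    omega
  omega

lemma R3 (s : ℕ) : Aw (2*s+1) + Bw (s+1) = s + 1 := by
  obtain ⟨i, hi⟩ := Aw_mem (2*s+1)
  obtain ⟨j0, hj0⟩ := Bw_mem (s+1)
  have hup : Aw (2*s+1) + Bw (s+1) ≤ s + 1 := by
    rcases Nat.even_or_odd i with ⟨j, hj⟩ | ⟨j, hj⟩
    · have hj' : i = 2*j := by omega
      subst hj'
      have := L3 j s; have := Bw_succ_le j s; omega
    · have hj' : i = 2*j+1 := by omega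
      subst hj'
      have := L4 j s; have := Bw_le j (s+1); omega
  have hlo : s + 1 ≤ Aw (2*s+1) + Bw (s+1) := by
    have h1 := L4 j0 s
    have h2 := le_Aw (2*j0+1) (2*s+1)
    omega
  omega

lemma R4 (s : ℕ) : Bw (2*s+1) + Aw s = s := by
  obtain ⟨i, hi⟩ := Bw_mem (2*s+1)
  obtain ⟨j0, hj0⟩ := Aw_mem s
  have hlo : s ≤ Bw (2*s+1) + Aw s := by
    rcases Nat.even_or_odd i with ⟨j, hj⟩ | ⟨j, hj⟩
    · have hj' : i = 2*j := by omega
      subst hj'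
      have := L3 j s; have := le_Aw j s; omega
    · have hj' : i = 2*j+1 := by omega
      subst hj'
      have h4 := L4 j s
      have h5 := le_Aw j s
      have h6 : aw j (s+1) ≤ aw j s + 1 := by
        rw [aw_succ]; have := pd_le (j+s); omega
      omega
  have hup : Bw (2*s+1) + Aw s ≤ s := by
    have h1 := L3 j0 s
    have h2 := Bw_le (2*j0) (2*s+1)
    have := aw_le (2*j0) (2*s+1)
    omega
  omega

lemma Aw0 : Aw 0 = 0 := by
  obtain ⟨i, hi⟩ := Aw_mem 0; rw [← hi, aw_zero]

lemma Bw0 : Bw 0 = 0 := by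
  have := Bw_le 0 0; have := aw_le 0 0
  have h0 : aw 0 0 = 0 := aw_zero 0
  omega

lemma pd0 : pd 0 = 0 := by simp [pd]

lemma pd1 : pd 1 = 1 := by
  unfold pd
  rw [show (1+1 : ℕ) = 2 from rfl, Nat.Prime.factorization_self Nat.prime_two]

lemma Aw1 : Aw 1 = 1 := by
  have h1 : aw 1 1 = 1 := by rw [aw_succ, aw_zero, pd1]
  have := le_Aw 1 1
  have := Aw_le 1
  omega

lemma Bw1 : Bw 1 = 0 := by
  have h1 : aw 0 1 = 0 := by rw [aw_succ, aw_zero, pd0]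
  have := Bw_le 0 1
  omega

lemma pow2_even (l : ℕ) (h : 1 ≤ l) : 2^l % 2 = 0 := by
  obtain ⟨k, rfl⟩ : ∃ k, l = k+1 := ⟨l-1, by omega⟩
  rw [pow_succ]
  omega

lemma Aw2 : Aw 2 = 1 := by have := R1 1; norm_num [Bw1] at this; exact this
lemma Bw2 : Bw 2 = 0 := by have := R2 1; norm_num [Aw1] at this; omega
lemma Aw3 : Aw 3 = 2 := by have := R3 1; norm_num [Bw2] at this; exact this
lemma Bw3 : Bw 3 = 0 := by have := R4 1; norm_num [Aw1] at this; omega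
lemma Aw4 : Aw 4 = 2 := by have := R1 2; norm_num [Bw2] at this; exact this
lemma Bw4 : Bw 4 = 1 := by have := R2 2; norm_num [Aw2] at this; omega

def cf : ℕ → ℕ
  | 0 => 0
  | 1 => 1
  | (l+2) => 2^(l+1) + 1 - cf (l+1)

lemma cf_bounds : ∀ l, 1 ≤ cf (l+1) ∧ cf (l+1) ≤ 2^l := by
  intro l
  induction l with
  | zero => simp [cf]
  | succ l ih =>
    have h : cf (l+1+1) = 2^(l+1) + 1 - cf (l+1) := rfl
    have hp : (2:ℕ)^(l+1) = 2 * 2^l := by ring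
    omega

lemma cf_rec (l : ℕ) : cf (l+1+1) + cf (l+1) = 2^(l+1) + 1 := by
  have h : cf (l+1+1) = 2^(l+1) + 1 - cf (l+1) := rfl
  have := cf_bounds l
  have hp : (2:ℕ)^(l+1) = 2 * 2^l := by ring
  omega

lemma cf_par : ∀ l, cf (l+1) % 2 = (l+1) % 2 := by
  intro l
  induction l with
  | zero => simp [cf]
  | succ l ih =>
    have := cf_rec l
    have hp : (2:ℕ)^(l+1) = 2 * 2^l := by ring
    omega

lemma Plem : ∀ l, 1 ≤ l → ∀ r, 2*r ≤ 2^l →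
    Aw (2^l + r) = Aw r + cf l ∧ Bw (2^l + r) + 1 = Bw r + cf l := by
  intro l hl
  induction l, hl using Nat.le_induction with
  | base =>
    intro r hr
    norm_num at hr
    have hc : cf 1 = 1 := rfl
    interval_cases r
    · norm_num [Aw0, Bw0, Aw2, Bw2, hc]
    · norm_num [Aw1, Bw1, Aw3, Bw3, hc]
  | succ l hl ih =>
    intro r hr
    have hp : (2:ℕ)^(l+1) = 2 * 2^l := by ring
    have hev := pow2_even l hl
    have hcr : cf (l+1) + cf l = 2^l + 1 := by
      cases l with
      | zero => omega
      | succ k => have := cf_rec k; omega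
    rcases Nat.even_or_odd r with ⟨m, hm⟩ | ⟨m, hm⟩
    · have hm' : r = 2*m := by omega
      subst hm'
      have ih1 := ih m (by omega)
      have h1 := R1 (2^l + m)
      rw [show 2*(2^l+m) = 2^(l+1) + 2*m by ring] at h1
      have h2 := R2 (2^l + m)
      rw [show 2*(2^l+m) = 2^(l+1) + 2*m by ring] at h2
      have h3 := R1 m
      have h4 := R2 m
      have := Bw_le_Aw m
      have := Aw_le m
      omega
    · have hm' : r = 2*m+1 := by omega
      subst hm'
      have ih1 := ih m (by omega)
      have ih2 := ih (m+1) (by omega)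
      have h1 := R3 (2^l + m)
      rw [show 2*(2^l+m)+1 = 2^(l+1) + (2*m+1) by ring,
          show 2^l + m + 1 = 2^l + (m+1) by ring] at h1
      have h2 := R4 (2^l + m)
      rw [show 2*(2^l+m)+1 = 2^(l+1) + (2*m+1) by ring] at h2
      have h3 := R3 m
      have h4 := R4 m
      have := Bw_le_Aw (m+1)
      have := Aw_le (m+1)
      omega

lemma Jlem : ∀ l, 1 ≤ l → ∀ s s', s + s' + 1 = 3 * 2^l → 2^l ≤ s → 2^l ≤ s' →
    Aw (s+1) + Bw s' = Aw s + Bw (s'+1) := by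
  intro l hl
  induction l, hl using Nat.le_induction with
  | base =>
    intro s s' hsum hs hs'
    norm_num at hsum hs hs'
    have h2 : s ≤ 3 := by omega
    interval_cases s
    · have : s' = 3 := by omega
      subst this
      norm_num [Aw2, Aw3, Bw3, Bw4]
    · have : s' = 2 := by omega
      subst this
      norm_num [Aw3, Aw4, Bw2, Bw3]
  | succ l hl ih =>
    intro s s' hsum hs hs'
    have hp : (2:ℕ)^(l+1) = 2 * 2^l := by ring
    rcases Nat.even_or_odd s with ⟨t, ht⟩ | ⟨t, ht⟩
    · have ht' : s = 2*t := by omega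
      have ht2 : s' % 2 = 1 := by omega
      obtain ⟨t', ht''⟩ : ∃ t', s' = 2*t'+1 := ⟨s'/2, by omega⟩
      subst ht'; subst ht''
      have h1 := R3 t
      have h2 := R1 t
      have h3 := R4 t'
      have h4 := R2 (t'+1)
      rw [show 2*(t'+1) = 2*t'+1+1 by ring] at h4
      have hIH := ih t' t (by omega) (by omega) (by omega)
      have := Aw_le t'
      have := Bw_le_Aw (t+1)
      have := Aw_le (t+1)
      omega
    · have ht' : s = 2*t+1 := by omega
      have ht2 : s' % 2 = 0 := by omega
      obtain ⟨t', ht''⟩ : ∃ t', s' = 2*t' := ⟨s'/2, by omega⟩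
      subst ht'; subst ht''
      have h1 := R1 (t+1)
      rw [show 2*(t+1) = 2*t+1+1 by ring] at h1
      have h2 := R3 t
      have h3 := R2 t'
      have h4 := R4 t'
      omega

lemma Qlem : ∀ l, 1 ≤ l → ∀ u u', u + u' = 3 * 2^l → 2^l ≤ u → 2^l ≤ u' →
    Aw u + Bw u' = Bw u + Aw u' ∧ (Aw u + Bw u') % 2 = 0 := by
  intro l hl
  induction l, hl using Nat.le_induction with
  | base =>
    intro u u' hsum hu hu'
    norm_num at hsum hu hu'
    have h2 : u ≤ 4 := by omega
    interval_cases u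
    · have : u' = 4 := by omega
      subst this
      norm_num [Aw2, Bw2, Aw4, Bw4]
    · have : u' = 3 := by omega
      subst this
      norm_num [Aw3, Bw3]
    · have : u' = 2 := by omega
      subst this
      norm_num [Aw2, Bw2, Aw4, Bw4]
  | succ l hl ih =>
    intro u u' hsum hu hu'
    have hp : (2:ℕ)^(l+1) = 2 * 2^l := by ring
    have hev := pow2_even l hl
    rcases Nat.even_or_odd u with ⟨s, hs⟩ | ⟨s, hs⟩
    · have hs' : u = 2*s := by omega
      have hu2 : u' % 2 = 0 := by omega
      obtain ⟨s', hss⟩ : ∃ s', u' = 2*s' := ⟨u'/2, by omega⟩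
      subst hs'; subst hss
      have h1 := R1 s; have h2 := R2 s
      have h3 := R1 s'; have h4 := R2 s'
      have hIH := ih s s' (by omega) (by omega) (by omega)
      omega
    · have hs' : u = 2*s+1 := by omega
      have hu2 : u' % 2 = 1 := by omega
      obtain ⟨s', hss⟩ : ∃ s', u' = 2*s'+1 := ⟨u'/2, by omega⟩
      subst hs'; subst hss
      have h1 := R3 s; have h2 := R4 s
      have h3 := R3 s'; have h4 := R4 s'
      have hIH1 := ih (s+1) s' (by omega) (by omega) (by omega)
      have hIH2 := ih s (s'+1) (by omega) (by omega) (by omega)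
      have hJ := Jlem l hl s s' (by omega) (by omega) (by omega)
      have := Bw_le_Aw (s+1)
      have := Aw_le (s+1)
      have := Bw_le_Aw (s'+1)
      have := Aw_le (s'+1)
      have := Aw_le s
      have := Aw_le s'
      omega


lemma single_count (m : ℕ) : [yw m].count 1 + [yw m].count 2 + pd m = 1 := by
  have h := tm_pd m
  have t1 : tm m ≤ 1 := Nat.le_of_lt_succ (Nat.mod_lt _ (by norm_num))
  have t2 : tm (m+1) ≤ 1 := Nat.le_of_lt_succ (Nat.mod_lt _ (by norm_num))
  have p1 : pd m ≤ 1 := pd_le m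
  have hy : yw m = 2 * tm m + tm (m+1) := rfl
  have c1 : tm m = 0 ∨ tm m = 1 := by omega
  have c2 : tm (m+1) = 0 ∨ tm (m+1) = 1 := by omega
  rcases c1 with h1 | h1 <;> rcases c2 with h2 | h2 <;>
    rw [h1, h2] at h hy <;> norm_num at hy h <;>
    rw [hy] <;> simp [List.count_cons] <;> omega

lemma count_bridge (i n : ℕ) :
    (factorAt yw i n).count 1 + (factorAt yw i n).count 2 + aw i n = n := by
  induction n with
  | zero => simp [factorAt, aw_zero]
  | succ n ih =>
    have hfa : factorAt yw i (n+1) = factorAt yw i n ++ [yw (i+n)] := by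
      unfold factorAt
      rw [List.range_succ]
      simp
    rw [hfa, List.count_append, List.count_append, aw_succ]
    have := single_count (i+n)
    omega

lemma M12_eq (n : ℕ) : M12 n + Bw n = n := by
  obtain ⟨j, hj⟩ := Bw_mem n
  have hBn : Bw n ≤ n := le_trans (Bw_le 0 n) (aw_le 0 n)
  have hM : M12 n = n - Bw n := by
    apply IsGreatest.csSup_eq
    constructor
    · exact ⟨j, by have := count_bridge j n; omega⟩
    · rintro k ⟨i, rfl⟩
      have := count_bridge i n
      have := Bw_le i n
      omega
  omega

lemma m12_eq (n : ℕ) : m12 n + Aw n = n := by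
  obtain ⟨j, hj⟩ := Aw_mem n
  have hAn : Aw n ≤ n := Aw_le n
  have hM : m12 n = n - Aw n := by
    apply IsLeast.csInf_eq
    constructor
    · exact ⟨j, by have := count_bridge j n; omega⟩
    · rintro k ⟨i, rfl⟩
      have := count_bridge i n
      have := le_Aw i n
      omega
  omega


theorem stmt17 (l r : ℕ) (hl : 1 ≤ l) (hr : r < 2 ^ l) :
    (2 * r ≤ 2 ^ l →
      D12 (2 ^ l + r) = D12 r + 1 ∧
      m12 (2 ^ l + r) % 2 = (m12 r + l) % 2) ∧
    (2 ^ l < 2 * r →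
      D12 (2 ^ l + r) = D12 (2 ^ (l + 1) - r) ∧
      m12 (2 ^ l + r) % 2 = (m12 (2 ^ (l + 1) - r) + D12 (2 ^ (l + 1) - r)) % 2) := by
  obtain ⟨k, rfl⟩ : ∃ k, l = k + 1 := ⟨l - 1, by omega⟩
  have hev := pow2_even (k+1) hl
  have hp : (2:ℕ)^(k+1+1) = 2 * 2^(k+1) := by ring
  constructor
  · intro h2r
    obtain ⟨hA, hB⟩ := Plem (k+1) hl r h2r
    have e1 := M12_eq (2^(k+1) + r)
    have e2 := m12_eq (2^(k+1) + r)
    have e3 := M12_eq r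
    have e4 := m12_eq r
    have hba1 := Bw_le_Aw (2^(k+1) + r)
    have hba2 := Bw_le_Aw r
    have hc := cf_bounds k
    have hpar := cf_par k
    unfold D12
    omega
  · intro h2r
    have hsum : (2^(k+1) + r) + (2^(k+1+1) - r) = 3 * 2^(k+1) := by omega
    obtain ⟨hEq, hPar⟩ := Qlem (k+1) hl (2^(k+1)+r) (2^(k+1+1)-r) hsum (by omega) (by omega)
    have e1 := M12_eq (2^(k+1) + r)
    have e2 := m12_eq (2^(k+1) + r)
    have e3 := M12_eq (2^(k+1+1) - r)
    have e4 := m12_eq (2^(k+1+1) - r)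
    have hba1 := Bw_le_Aw (2^(k+1) + r)
    have hba2 := Bw_le_Aw (2^(k+1+1) - r)
    unfold D12
    omega
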